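/- arXiv:2601.13047 — 3 statements merged into one kernel-verified Lean document; each statement's English description precedes it below -/
import Mathlib

section
/- Let n ≥ 3 and let α : Fin n → ℕ be an assignment of agents to n nodes. Define S_i = {v : α(v) = i} and let L be the largest index with S_L ≠ ∅. If |S_0| ≥ 2 and S_i ≠ ∅ for every i ∈ [1, L] (i.e., there is no 'gap'), then the total number of agents satisfies ∑_v α(v) ≤ (n-2)(n-1)/2. -/
open Finset in
lemma aux_lowcard {n : ℕ} (α : Fin n → ℕ) (L : ℕ)
    (hS0 : 2 ≤ (Finset.univ.filter (fun v => α v = 0)).card)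
    (hnogap : ∀ i, 1 ≤ i → i ≤ L → ∃ v, α v = i)
    (j : ℕ) (hj : j ≤ L) :
    j + 2 ≤ (Finset.univ.filter (fun v => α v ≤ j)).card := by
  have hcard : (Finset.univ.filter (fun v => α v ≤ j)).card
      = ∑ i ∈ range (j + 1),
        ((Finset.univ.filter (fun v => α v ≤ j)).filter (fun v => α v = i)).card := by
    apply Finset.card_eq_sum_card_fiberwise
    intro v hv
    simp only [mem_coe, mem_filter] at hv
    simp [Nat.lt_succ_iff, hv.2]
  have hfib : ∀ i ≤ j, (Finset.univ.filter (fun v => α v ≤ j)).filter (fun v => α v = i)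
      = Finset.univ.filter (fun v => α v = i) := by
    intro i hi
    rw [Finset.filter_filter]
    apply Finset.filter_congr
    intro v _
    constructor
    · exact fun h => h.2
    · exact fun h => ⟨by omega, h⟩
  have hlow : ∀ i ∈ range (j + 1),
      (if i = 0 then 2 else 1) ≤
        ((Finset.univ.filter (fun v => α v ≤ j)).filter (fun v => α v = i)).card := by
    intro i hi
    rw [mem_range] at hi
    rw [hfib i (by omega)]
    by_cases h0 : i = 0
    · simpa [h0] using hS0
    · simp only [h0, if_false]
      obtain ⟨v, hv⟩ := hnogap i (by omega) (by omega)
      exact Finset.card_pos.mpr ⟨v, by simp [hv]⟩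
  calc j + 2 = ∑ i ∈ range (j + 1), (if i = 0 then 2 else 1) := by
        have he : ∀ i, (if i = 0 then 2 else 1) = 1 + (if i = 0 then 1 else 0) := by
          intro i; split <;> rfl
        simp only [he, Finset.sum_add_distrib, Finset.sum_const, Finset.card_range,
          smul_eq_mul, Finset.sum_ite_eq' (range (j+1)) 0 (fun _ => 1)]
        rw [if_pos (by simp : (0:ℕ) ∈ range (j+1))]
        omega
    _ ≤ _ := by rw [hcard]; exact Finset.sum_le_sum hlow

open Finset in
/-- Core counting argument of Lemma 5: with at least two empty nodes and no gap in
the occupied levels `1, …, L`, the total number of agents is at most `(n-2)(n-1)/2`. -/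
theorem stmt_5 (n : ℕ) (hn : 3 ≤ n) (α : Fin n → ℕ) (L : ℕ)
    (hLmem : ∃ v, α v = L) (hLmax : ∀ v, α v ≤ L)
    (hS0 : 2 ≤ (Finset.univ.filter (fun v => α v = 0)).card)
    (hnogap : ∀ i, 1 ≤ i → i ≤ L → ∃ v, α v = i) :
    ∑ v, α v ≤ (n - 2) * (n - 1) / 2 := by
  -- L ≤ n - 2
  have hLn : L + 2 ≤ n := by
    have h := aux_lowcard α L hS0 hnogap L le_rfl
    have : (Finset.univ.filter (fun v => α v ≤ L)).card ≤ n := by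
      simpa using Finset.card_filter_le Finset.univ (fun v => α v ≤ L)
    omega
  -- rewrite the sum
  have hrw : ∑ v, α v = ∑ j ∈ range L, (Finset.univ.filter (fun v => j < α v)).card := by
    have h1 : ∀ v, α v = ∑ j ∈ range L, (if j < α v then 1 else 0) := by
      intro v
      rw [← Finset.card_filter]
      have : (range L).filter (fun j => j < α v) = range (α v) := by
        ext j; simp only [mem_filter, mem_range]
        have := hLmax v; omega
      simp [this]
    calc ∑ v, α v = ∑ v, ∑ j ∈ range L, (if j < α v then 1 else 0) := by
          exact Finset.sum_congr rfl (fun v _ => h1 v)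
      _ = ∑ j ∈ range L, ∑ v, (if j < α v then 1 else 0) := Finset.sum_comm
      _ = _ := by
          apply Finset.sum_congr rfl
          intro j _
          rw [Finset.card_filter]
  rw [hrw]
  have hterm : ∀ j ∈ range L, (Finset.univ.filter (fun v => j < α v)).card ≤ n - 2 - j := by
    intro j hj
    rw [mem_range] at hj
    have h := aux_lowcard α L hS0 hnogap j (by omega)
    have hsplit : (Finset.univ.filter (fun v => α v ≤ j)).card
        + (Finset.univ.filter (fun v => ¬ α v ≤ j)).card = n := by
      rw [Finset.card_filter_add_card_filter_not]
      simp
    have heq : (Finset.univ.filter (fun v => ¬ α v ≤ j)) =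
        (Finset.univ.filter (fun v => j < α v)) := by
      apply Finset.filter_congr; intro v _; omega
    rw [heq] at hsplit
    omega
  calc ∑ j ∈ range L, (Finset.univ.filter (fun v => j < α v)).card
      ≤ ∑ j ∈ range L, (n - 2 - j) := Finset.sum_le_sum hterm
    _ ≤ ∑ j ∈ range (n - 2), (n - 2 - j) := by
        apply Finset.sum_le_sum_of_subset
        exact Finset.range_subset_range.mpr (by omega)
    _ = ∑ j ∈ range (n - 2), (j + 1) := by
        rw [← Finset.sum_range_reflect (fun i => i + 1) (n - 2)]
        apply Finset.sum_congr rfl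
        intro j hj
        rw [mem_range] at hj
        omega
    _ = ∑ j ∈ range (n - 1), j := by
        have h : n - 1 = n - 2 + 1 := by omega
        rw [h, Finset.sum_range_succ' (fun j => j) (n - 2)]
        simp
    _ = (n - 1) * (n - 2) / 2 := by
        rw [Finset.sum_range_id]
        have : n - 1 - 1 = n - 2 := by omega
        rw [this]
    _ = (n - 2) * (n - 1) / 2 := by rw [Nat.mul_comm]
end

section
/- Let n ≥ 3 and let α : Fin n → ℕ with ∑_v α(v) = (n-2)(n-1)/2 + 1. Define S_i = {v : α(v) = i}. If |S_0| ≥ 2, then there exist indices i and j with j ≥ i + 2 such that S_i ≠ ∅, S_j ≠ ∅, and S_k = ∅ for all k with i < k < j. -/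
/-- Lemma 5 (lm:Condition): with `(n-2)(n-1)/2 + 1` agents on `n` nodes and at least
two empty nodes, the set of occupied agent-count levels contains a gap of size ≥ 2. -/
theorem stmt_6 (n : ℕ) (hn : 3 ≤ n) (α : Fin n → ℕ)
    (htotal : ∑ v, α v = (n - 2) * (n - 1) / 2 + 1)
    (hS0 : 2 ≤ (Finset.univ.filter (fun v => α v = 0)).card) :
    ∃ i j : ℕ, i + 2 ≤ j ∧ (∃ v, α v = i) ∧ (∃ v, α v = j) ∧
      ∀ k, i < k → k < j → ¬∃ v, α v = k := by
  classical
  by_contra hcon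
  push_neg at hcon
  have hocc0 : ∃ v, α v = 0 := by
    have h2 : (0:ℕ) < (Finset.univ.filter (fun v => α v = 0)).card := by omega
    obtain ⟨v, hv⟩ := Finset.card_pos.mp h2
    exact ⟨v, (Finset.mem_filter.mp hv).2⟩
  have hstep : ∀ j, 1 ≤ j → (∃ v, α v = j) → ∃ v, α v = j - 1 := by
    intro j hj hoccj
    set s := (Finset.range j).filter (fun i => ∃ v, α v = i) with hs
    have h0s : 0 ∈ s := Finset.mem_filter.mpr ⟨Finset.mem_range.mpr hj, hocc0⟩
    have hsne : s.Nonempty := ⟨0, h0s⟩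
    set i := s.max' hsne with hi
    have his : i ∈ s := s.max'_mem hsne
    have hij : i < j := Finset.mem_range.mp (Finset.mem_filter.mp his).1
    have hocci : ∃ v, α v = i := (Finset.mem_filter.mp his).2
    by_cases hcase : i = j - 1
    · exact hcase ▸ hocci
    · have h2 : i + 2 ≤ j := by omega
      obtain ⟨k, hik, hkj, hocck⟩ := hcon i j h2 hocci hoccj
      have hks : k ∈ s := Finset.mem_filter.mpr ⟨Finset.mem_range.mpr hkj, hocck⟩
      have := Finset.le_max' s k hks
      omega
  have hdown : ∀ d k, (∃ v, α v = k + d) → ∃ v, α v = k := by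
    intro d
    induction d with
    | zero => exact fun k h => by simpa using h
    | succ d ih =>
      intro k h
      apply ih k
      have := hstep (k + d + 1) (by omega) (by rwa [Nat.add_assoc])
      simpa using this
  have hne : (Finset.univ.image α).Nonempty :=
    ⟨α ⟨0, by omega⟩, Finset.mem_image_of_mem α (Finset.mem_univ _)⟩
  set M := (Finset.univ.image α).max' hne with hM
  have hoccM : ∃ v, α v = M := by
    have := (Finset.univ.image α).max'_mem hne
    simpa [Finset.mem_image] using this
  have hle : ∀ v, α v ≤ M := fun v =>
    Finset.le_max' _ _ (Finset.mem_image_of_mem α (Finset.mem_univ v))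
  have hocc : ∀ i, i ≤ M → ∃ v, α v = i := by
    intro i hi
    exact hdown (M - i) i (by rw [Nat.add_sub_cancel' hi]; exact hoccM)
  set c : ℕ → ℕ := fun i => (Finset.univ.filter (fun v => α v = i)).card with hc
  have hmaps : ∀ v ∈ (Finset.univ : Finset (Fin n)), α v ∈ Finset.range (M+1) :=
    fun v _ => Finset.mem_range.mpr (Nat.lt_succ_of_le (hle v))
  have hcardn : ∑ i ∈ Finset.range (M+1), c i = n := by
    have := Finset.card_eq_sum_card_fiberwise hmaps
    simp only [Finset.card_univ, Fintype.card_fin] at this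
    exact this.symm
  have hsumT : ∑ i ∈ Finset.range (M+1), i * c i = (n-2)*(n-1)/2 + 1 := by
    rw [← htotal, ← Finset.sum_fiberwise_of_maps_to hmaps α]
    apply Finset.sum_congr rfl
    intro i _
    rw [Finset.sum_congr rfl (fun v hv => (Finset.mem_filter.mp hv).2),
      Finset.sum_const, smul_eq_mul, mul_comm]
  have hc0 : 2 ≤ c 0 := hS0
  have hci : ∀ i ∈ Finset.range (M+1), 1 ≤ c i := by
    intro i hi
    obtain ⟨v, hv⟩ := hocc i (by simpa [Nat.lt_succ_iff] using Finset.mem_range.mp hi)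
    exact Finset.card_pos.mpr ⟨v, Finset.mem_filter.mpr ⟨Finset.mem_univ v, hv⟩⟩
  have h0 : (0:ℕ) ∈ Finset.range (M+1) := Finset.mem_range.mpr (by omega)
  set e := (Finset.range (M+1)).erase 0 with he
  have hMn : M + 2 ≤ n := by
    have h' := hcardn
    rw [← Finset.add_sum_erase _ c h0] at h'
    have hle1 : ∑ i ∈ e, 1 ≤ ∑ i ∈ e, c i :=
      Finset.sum_le_sum (fun i hi => hci i (Finset.mem_of_mem_erase hi))
    rw [Finset.sum_const, smul_eq_mul, mul_one] at hle1
    have hcarde : e.card = M := by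
      rw [he, Finset.card_erase_of_mem h0, Finset.card_range]
      omega
    rw [← he] at h'
    rw [hcarde] at hle1
    omega
  have hb : ∀ i ∈ e, i * c i + (M - i) ≤ M * c i := by
    intro i hi
    have h1 : 1 ≤ c i := hci i (Finset.mem_of_mem_erase hi)
    have h2 : i ≤ M := by
      have := Finset.mem_range.mp (Finset.mem_of_mem_erase hi); omega
    calc i * c i + (M - i) ≤ i * c i + (M - i) * c i := by nlinarith
      _ = (i + (M - i)) * c i := (Nat.add_mul _ _ _).symm
      _ = M * c i := by rw [Nat.add_sub_cancel' h2]
  have hsb : ∑ i ∈ e, i * c i + ∑ i ∈ e, (M - i) ≤ ∑ i ∈ e, M * c i := by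
    have := Finset.sum_le_sum hb
    rwa [Finset.sum_add_distrib] at this
  have hT' : ∑ i ∈ e, i * c i = (n-2)*(n-1)/2 + 1 := by
    rw [he, Finset.sum_erase _ (by simp)]
    exact hsumT
  have hG : ∑ i ∈ Finset.range (M+1), (M - i) = ∑ i ∈ Finset.range (M+1), i := by
    have := Finset.sum_range_reflect (fun i => i) (M+1)
    simpa using this
  have hG2 : (∑ i ∈ Finset.range (M+1), i) * 2 = (M+1) * M :=
    Finset.sum_range_id_mul_two (M+1)
  have heE : (M - 0) + ∑ i ∈ e, (M - i) = ∑ i ∈ Finset.range (M+1), (M - i) :=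
    Finset.add_sum_erase (Finset.range (M+1)) (fun i => M - i) h0
  have hMneq : M * c 0 + ∑ i ∈ e, M * c i = M * n := by
    rw [he, Finset.add_sum_erase (Finset.range (M+1)) (fun i => M * c i) h0,
      ← Finset.mul_sum, hcardn]
  have h2M : M * 2 ≤ M * c 0 := Nat.mul_le_mul_left M hc0
  obtain ⟨a, ha⟩ : ∃ a, n = M + a + 2 := ⟨n - M - 2, by omega⟩
  have hT2 : ((n-2)*(n-1)/2) * 2 = (M+a) * (M+a+1) := by
    have hev : Even ((M+a) * ((M+a)+1)) := Nat.even_mul_succ_self (M+a)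
    have hn2 : n - 2 = M + a := by omega
    have hn1 : n - 1 = M + a + 1 := by omega
    rw [hn2, hn1]
    exact Nat.div_mul_cancel hev.two_dvd
  -- abbreviate sums
  set x := ∑ i ∈ Finset.range (M+1), i with hx
  set E1 := ∑ i ∈ e, (M - i) with hE1
  set E2 := ∑ i ∈ e, M * c i with hE2
  rw [ha] at hMneq
  rw [hT'] at hsb
  rw [hG] at heE
  simp only [Nat.sub_zero] at heE
  nlinarith [hsb, heE, hG2, hMneq, h2M, hT2, sq_nonneg a]
end

section
/- Let n ≥ 7 and 6 ≤ p ≤ n - 1. Consider the two port-labelled trees G_1 and G_2 on vertex set {w_1, …, w_n} defined as follows. In G_1: path w_1 ∼ w_{n-p+1} ∼ w_{n-p+2} ∼ … ∼ w_n, with each w_i for 2 ≤ i ≤ n-p attached as a leaf to w_{n-p+1}. In G_2: path w_1 ∼ w_{n-2} ∼ w_{n-3} ∼ … ∼ w_{n-p+2} ∼ w_{n-p+1} ∼ w_{n-1} ∼ w_n, with each w_i for 2 ≤ i ≤ n-p attached as a leaf to w_{n-p+1}. Then both G_1 and G_2 are connected with diameter exactly p, and the subgraphs induced by S* = {w_{n-p+1},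 …, w_{n-2}} are isomorphic (both being the star centered at w_{n-p+1} joined to the path w_{n-p+2} ∼ … ∼ w_{n-2}). -/
open SimpleGraph

/-- A vertex of `Fin n` with value `min i (n-1)`. -/
private def vtx (n : ℕ) (hn : 0 < n) (i : ℕ) : Fin n := ⟨min i (n-1), by omega⟩

private lemma vtx_val {n : ℕ} (hn : 0 < n) {i : ℕ} (h : i ≤ n - 1) :
    ((vtx n hn i : Fin n) : ℕ) = i := by simp [vtx]; omega

/-- Along any walk, a 1-Lipschitz integer potential changes by at most the length. -/
private lemma walk_lip {V : Type*} {G : SimpleGraph V} (f : V → ℤ)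
    (hf : ∀ a b, G.Adj a b → |f a - f b| ≤ 1) :
    ∀ {u v : V} (w : G.Walk u v), |f u - f v| ≤ w.length := by
  intro u v w
  induction w with
  | nil => simp
  | @cons a b c h q ih =>
      have h1 := hf a b h
      calc |f a - f c| ≤ |f a - f b| + |f b - f c| := abs_sub_le _ _ _
        _ ≤ 1 + q.length := by exact add_le_add h1 ih
        _ = (SimpleGraph.Walk.cons h q).length := by
            rw [SimpleGraph.Walk.length_cons]; push_cast; ring

/-- A chain of adjacent vertices yields a walk of the expected length. -/
private lemma chain_walk {V : Type*} {G : SimpleGraph V} (x : ℕ → V) (a : ℕ) :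
    ∀ b, a ≤ b → (∀ j, a ≤ j → j < b → G.Adj (x j) (x (j+1))) →
      ∃ w : G.Walk (x a) (x b), w.length = b - a := by
  intro b
  induction b with
  | zero =>
      intro hab _
      have : a = 0 := by omega
      subst this
      exact ⟨SimpleGraph.Walk.nil, by simp⟩
  | succ b ih =>
      intro hab hadj
      by_cases hab' : a ≤ b
      · obtain ⟨w, hw⟩ := ih hab' (fun j hj hj2 => hadj j hj (by omega))
        refine ⟨w.concat (hadj b hab' (by omega)), ?_⟩
        rw [SimpleGraph.Walk.length_concat, hw]; omega
      · have : a = b + 1 := by omega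
        subst this
        exact ⟨SimpleGraph.Walk.nil, by simp⟩

private lemma chain_dist {V : Type*} {G : SimpleGraph V} (x : ℕ → V) {a b : ℕ}
    (hab : a ≤ b) (hadj : ∀ j, a ≤ j → j < b → G.Adj (x j) (x (j+1))) :
    G.dist (x a) (x b) ≤ b - a ∧ G.Reachable (x a) (x b) := by
  obtain ⟨w, hw⟩ := chain_walk x a b hab hadj
  exact ⟨hw ▸ SimpleGraph.dist_le w, w.reachable⟩

set_option maxHeartbeats 1600000 in
/-- Graph-theoretic core of Theorem 5: the two adversarial trees `G₁` and `G₂` on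
`{w_1, …, w_n}` (node `w_i` represented by `i - 1 : Fin n`) are connected, have
diameter exactly `p`, and induce isomorphic subgraphs on
`S* = {w_{n-p+1}, …, w_{n-2}}`. -/
theorem stmt_16 (n p : ℕ) (hn : 7 ≤ n) (hp : 6 ≤ p) (hpn : p ≤ n - 1)
    (G1 G2 : SimpleGraph (Fin n))
    (hG1 : ∀ a b : Fin n, G1.Adj a b ↔ a ≠ b ∧
      (((a : ℕ) = 0 ∧ (b : ℕ) = n - p) ∨ ((b : ℕ) = 0 ∧ (a : ℕ) = n - p) ∨
       (∃ i, n - p ≤ i ∧ i ≤ n - 2 ∧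
         (((a : ℕ) = i ∧ (b : ℕ) = i + 1) ∨ ((b : ℕ) = i ∧ (a : ℕ) = i + 1))) ∨
       (∃ i, 1 ≤ i ∧ i ≤ n - p - 1 ∧
         (((a : ℕ) = i ∧ (b : ℕ) = n - p) ∨ ((b : ℕ) = i ∧ (a : ℕ) = n - p)))))
    (hG2 : ∀ a b : Fin n, G2.Adj a b ↔ a ≠ b ∧
      (((a : ℕ) = 0 ∧ (b : ℕ) = n - 3) ∨ ((b : ℕ) = 0 ∧ (a : ℕ) = n - 3) ∨
       (∃ i, n - p ≤ i ∧ i ≤ n - 4 ∧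
         (((a : ℕ) = i ∧ (b : ℕ) = i + 1) ∨ ((b : ℕ) = i ∧ (a : ℕ) = i + 1))) ∨
       ((a : ℕ) = n - p ∧ (b : ℕ) = n - 2) ∨ ((b : ℕ) = n - p ∧ (a : ℕ) = n - 2) ∨
       ((a : ℕ) = n - 2 ∧ (b : ℕ) = n - 1) ∨ ((b : ℕ) = n - 2 ∧ (a : ℕ) = n - 1) ∨
       (∃ i, 1 ≤ i ∧ i ≤ n - p - 1 ∧
         (((a : ℕ) = i ∧ (b : ℕ) = n - p) ∨ ((b : ℕ) = i ∧ (a : ℕ) = n - p))))) :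
    G1.Connected ∧ G2.Connected ∧ G1.diam = p ∧ G2.diam = p ∧
    Nonempty
      (G1.induce {v : Fin n | n - p ≤ (v : ℕ) ∧ (v : ℕ) ≤ n - 3} ≃g
       G2.induce {v : Fin n | n - p ≤ (v : ℕ) ∧ (v : ℕ) ≤ n - 3}) := by
  have hn0 : 0 < n := by omega
  set m := n - p with hm
  have hm1 : 1 ≤ m := by omega
  have hm6 : m + 6 ≤ n := by omega
  have hmp : m + p = n := by omega
  set x : ℕ → Fin n := vtx n hn0 with hxdef
  have hx : ∀ {i : ℕ}, i ≤ n - 1 → ((x i : Fin n) : ℕ) = i := fun h => vtx_val hn0 h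
  have hrep : ∀ u : Fin n, u = x (u : ℕ) := by
    intro u
    have := u.isLt
    exact Fin.ext (by rw [hx (by omega)])
  have hne : ∀ {u v : Fin n}, (u : ℕ) ≠ (v : ℕ) → u ≠ v := by
    intro u v h heq; exact h (by rw [heq])
  haveI : Nonempty (Fin n) := ⟨x 0⟩
  -- Adjacency facts for G1
  have adjpath1 : ∀ j, m ≤ j → j < n - 1 → G1.Adj (x j) (x (j+1)) := by
    intro j hj hj'
    rw [hG1]
    have h1 : ((x j : Fin n) : ℕ) = j := hx (by omega)
    have h2 : ((x (j+1) : Fin n) : ℕ) = j + 1 := hx (by omega)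
    exact ⟨hne (by omega), Or.inr (Or.inr (Or.inl ⟨j, hj, by omega, Or.inl ⟨h1, h2⟩⟩))⟩
  have adjhub1 : ∀ u : Fin n, (u : ℕ) < m → G1.Adj u (x m) := by
    intro u hu
    rw [hG1]
    have h2 : ((x m : Fin n) : ℕ) = m := hx (by omega)
    refine ⟨hne (by omega), ?_⟩
    rcases Nat.eq_zero_or_pos (u : ℕ) with h0 | h0
    · exact Or.inl ⟨h0, h2⟩
    · exact Or.inr (Or.inr (Or.inr ⟨(u : ℕ), h0, by omega, Or.inl ⟨rfl, h2⟩⟩))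
  -- Adjacency facts for G2
  have adjpath2 : ∀ j, m ≤ j → j < n - 3 → G2.Adj (x j) (x (j+1)) := by
    intro j hj hj'
    rw [hG2]
    have h1 : ((x j : Fin n) : ℕ) = j := hx (by omega)
    have h2 : ((x (j+1) : Fin n) : ℕ) = j + 1 := hx (by omega)
    exact ⟨hne (by omega), Or.inr (Or.inr (Or.inl ⟨j, hj, by omega, Or.inl ⟨h1, h2⟩⟩))⟩
  have adj0 : G2.Adj (x 0) (x (n-3)) := by
    rw [hG2]
    have h1 : ((x 0 : Fin n) : ℕ) = 0 := hx (by omega)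
    have h2 : ((x (n-3) : Fin n) : ℕ) = n - 3 := hx (by omega)
    exact ⟨hne (by omega), Or.inl ⟨h1, h2⟩⟩
  have adjm2 : G2.Adj (x m) (x (n-2)) := by
    rw [hG2]
    have h1 : ((x m : Fin n) : ℕ) = m := hx (by omega)
    have h2 : ((x (n-2) : Fin n) : ℕ) = n - 2 := hx (by omega)
    exact ⟨hne (by omega), Or.inr (Or.inr (Or.inr (Or.inl ⟨by omega, h2⟩)))⟩
  have adj21 : G2.Adj (x (n-2)) (x (n-1)) := by
    rw [hG2]
    have h1 : ((x (n-2) : Fin n) : ℕ) = n - 2 := hx (by omega)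
    have h2 : ((x (n-1) : Fin n) : ℕ) = n - 1 := hx (by omega)
    exact ⟨hne (by omega),
      Or.inr (Or.inr (Or.inr (Or.inr (Or.inr (Or.inl ⟨h1, h2⟩)))))⟩
  have adjleaf2 : ∀ u : Fin n, 1 ≤ (u : ℕ) → (u : ℕ) < m → G2.Adj u (x m) := by
    intro u h1 h2
    rw [hG2]
    have hxm : ((x m : Fin n) : ℕ) = m := hx (by omega)
    exact ⟨hne (by omega),
      Or.inr (Or.inr (Or.inr (Or.inr (Or.inr (Or.inr (Or.inr
        ⟨(u : ℕ), h1, by omega, Or.inl ⟨rfl, hxm⟩⟩))))))⟩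
  -- Connectivity of G1
  have reach1 : ∀ u : Fin n, G1.Reachable u (x m) := by
    intro u
    rcases lt_or_ge (u : ℕ) m with hu | hu
    · exact (adjhub1 u hu).reachable
    · have hu' : (u : ℕ) ≤ n - 1 := by have := u.isLt; omega
      have := (chain_dist (G := G1) x hu (fun j hj hj' => adjpath1 j hj (by omega))).2
      rw [← hrep u] at this
      exact this.symm
  have hconn1 : G1.Connected :=
    { preconnected := fun u v => (reach1 u).trans (reach1 v).symm, nonempty := ‹_› }
  -- Connectivity of G2
  have reach2 : ∀ u : Fin n, G2.Reachable u (x m) := by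
    intro u
    have hu' : (u : ℕ) ≤ n - 1 := by have := u.isLt; omega
    rcases Nat.eq_zero_or_pos (u : ℕ) with h0 | h0
    · have hchain := (chain_dist (G := G2) x (a := m) (b := n-3) (by omega)
        (fun j hj hj' => adjpath2 j hj (by omega))).2
      have hu : u = x 0 := by rw [hrep u, h0]
      rw [hu]
      exact adj0.reachable.trans hchain.symm
    · rcases lt_or_ge (u : ℕ) m with hu | hu
      · exact (adjleaf2 u h0 hu).reachable
      · rcases lt_or_ge (u : ℕ) (n - 2) with h2 | h2
        · have := (chain_dist (G := G2) x hu (fun j hj hj' => adjpath2 j hj (by omega))).2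
          rw [← hrep u] at this
          exact this.symm
        · rcases Nat.lt_or_ge (u : ℕ) (n-1) with h3 | h3
          · have hu2 : u = x (n-2) := by rw [hrep u]; congr 1; omega
            rw [hu2]; exact adjm2.reachable.symm
          · have hu2 : u = x (n-1) := by rw [hrep u]; congr 1; omega
            rw [hu2]
            exact adj21.reachable.symm.trans adjm2.reachable.symm
  have hconn2 : G2.Connected :=
    { preconnected := fun u v => (reach2 u).trans (reach2 v).symm, nonempty := ‹_› }
  -- distance upper bounds for G1
  have dist_le_one : ∀ {G : SimpleGraph (Fin n)} {u v : Fin n}, G.Adj u v → G.dist u v ≤ 1 :=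
    fun h => le_of_eq (SimpleGraph.dist_eq_one_iff_adj.mpr h)
  have hxm : ((x m : Fin n) : ℕ) = m := hx (by omega)
  have hxn3 : ((x (n-3) : Fin n) : ℕ) = n - 3 := hx (by omega)
  have chain1 : ∀ u v : Fin n, m ≤ (u : ℕ) → (u : ℕ) ≤ (v : ℕ) →
      G1.dist u v ≤ (v : ℕ) - (u : ℕ) := by
    intro u v hu huv
    have hv' : (v : ℕ) ≤ n - 1 := by have := v.isLt; omega
    have := (chain_dist (G := G1) x (a := (u : ℕ)) (b := (v : ℕ)) huv
      (fun j hj hj' => adjpath1 j (by omega) (by omega))).1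
    rwa [← hrep u, ← hrep v] at this
  have ub1 : ∀ u v : Fin n, G1.dist u v ≤ p := by
    have key : ∀ u v : Fin n, (u : ℕ) ≤ (v : ℕ) → G1.dist u v ≤ p := by
      intro u v huv
      have hv' : (v : ℕ) ≤ n - 1 := by have := v.isLt; omega
      rcases lt_or_ge (u : ℕ) m with hu | hu
      · rcases lt_or_ge (v : ℕ) m with hv | hv
        · -- both near hub
          calc G1.dist u v ≤ G1.dist u (x m) + G1.dist (x m) v := hconn1.dist_triangle
            _ ≤ 1 + 1 := add_le_add (dist_le_one (adjhub1 u hu))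
                (by rw [SimpleGraph.dist_comm]; exact dist_le_one (adjhub1 v hv))
            _ ≤ p := by omega
        · have h2 : G1.dist (x m) v ≤ (v : ℕ) - m := by
            have := chain1 (x m) v (by omega) (by omega)
            omega
          calc G1.dist u v ≤ G1.dist u (x m) + G1.dist (x m) v := hconn1.dist_triangle
            _ ≤ 1 + ((v : ℕ) - m) := add_le_add (dist_le_one (adjhub1 u hu)) h2
            _ ≤ p := by omega
      · have := chain1 u v hu huv
        omega
    intro u v
    rcases le_total (u : ℕ) (v : ℕ) with h | h
    · exact key u v h
    · rw [SimpleGraph.dist_comm]; exact key v u h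
  -- distance upper bounds for G2
  have chain2 : ∀ u v : Fin n, m ≤ (u : ℕ) → (u : ℕ) ≤ (v : ℕ) → (v : ℕ) ≤ n - 3 →
      G2.dist u v ≤ (v : ℕ) - (u : ℕ) := by
    intro u v hu huv hv
    have := (chain_dist (G := G2) x (a := (u : ℕ)) (b := (v : ℕ)) huv
      (fun j hj hj' => adjpath2 j (by omega) (by omega))).1
    rwa [← hrep u, ← hrep v] at this
  -- hub distances in G2
  have d2hub : ∀ u : Fin n, G2.dist u (x m) ≤ p - 2 := by
    intro u
    have hu' : (u : ℕ) ≤ n - 1 := by have := u.isLt; omega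
    rcases Nat.eq_zero_or_pos (u : ℕ) with h0 | h0
    · have hu : u = x 0 := by rw [hrep u, h0]
      calc G2.dist u (x m) ≤ G2.dist u (x (n-3)) + G2.dist (x (n-3)) (x m) :=
            hconn2.dist_triangle
        _ ≤ 1 + (n - 3 - m) := add_le_add (by rw [hu]; exact dist_le_one adj0)
            (by rw [SimpleGraph.dist_comm]
                have := chain2 (x m) (x (n-3)) (by omega) (by omega) (by omega)
                omega)
        _ ≤ p - 2 := by omega
    · rcases lt_or_ge (u : ℕ) m with hu | hu
      · have := dist_le_one (adjleaf2 u h0 hu); omega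
      · rcases lt_or_ge (u : ℕ) (n - 2) with h2 | h2
        · rw [SimpleGraph.dist_comm]
          have := chain2 (x m) u (by omega) (by omega) (by omega)
          omega
        · rcases Nat.lt_or_ge (u : ℕ) (n-1) with h3 | h3
          · have hu2 : u = x (n-2) := by rw [hrep u]; congr 1; omega
            rw [hu2, SimpleGraph.dist_comm]
            have := dist_le_one adjm2; omega
          · have hu2 : u = x (n-1) := by rw [hrep u]; congr 1; omega
            calc G2.dist u (x m) ≤ G2.dist u (x (n-2)) + G2.dist (x (n-2)) (x m) :=
                  hconn2.dist_triangle
              _ ≤ 1 + 1 := add_le_add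
                  (by rw [hu2, SimpleGraph.dist_comm]; exact dist_le_one adj21)
                  (by rw [SimpleGraph.dist_comm]; exact dist_le_one adjm2)
              _ ≤ p - 2 := by omega
  have d2hub' : ∀ u : Fin n, 1 ≤ (u : ℕ) → ((u : ℕ) < m ∨ (u : ℕ) = n - 2) →
      G2.dist u (x m) ≤ 1 := by
    intro u h1 h2
    rcases h2 with h2 | h2
    · exact dist_le_one (adjleaf2 u h1 h2)
    · have hu2 : u = x (n-2) := by rw [hrep u]; congr 1
      rw [hu2, SimpleGraph.dist_comm]; exact dist_le_one adjm2
  have ub2 : ∀ u v : Fin n, G2.dist u v ≤ p := by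
    have key : ∀ u v : Fin n, (u : ℕ) ≤ (v : ℕ) → G2.dist u v ≤ p := by
      intro u v huv
      have hv' : (v : ℕ) ≤ n - 1 := by have := v.isLt; omega
      by_cases heq : (u : ℕ) = (v : ℕ)
      · have : u = v := Fin.ext heq
        rw [this, SimpleGraph.dist_self]; omega
      · rcases Nat.eq_zero_or_pos (u : ℕ) with h0 | h0
        · -- u = 0
          have hu : u = x 0 := by rw [hrep u, h0]
          rcases lt_or_ge (v : ℕ) m with hv | hv
          · -- v a leaf
            calc G2.dist u v ≤ G2.dist u (x m) + G2.dist (x m) v := hconn2.dist_triangle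
              _ ≤ (p - 2) + 1 := add_le_add (d2hub u)
                  (by rw [SimpleGraph.dist_comm]
                      exact d2hub' v (by omega) (Or.inl hv))
              _ ≤ p := by omega
          · rcases le_or_gt (v : ℕ) (n - 3) with hv3 | hv3
            · -- v on the path: go through x (n-3)
              calc G2.dist u v ≤ G2.dist u (x (n-3)) + G2.dist (x (n-3)) v :=
                    hconn2.dist_triangle
                _ ≤ 1 + (n - 3 - (v : ℕ)) := add_le_add
                    (by rw [hu]; exact dist_le_one adj0)
                    (by rw [SimpleGraph.dist_comm]
                        have := chain2 v (x (n-3)) hv (by omega) (by omega)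
                        omega)
                _ ≤ p := by omega
            · rcases Nat.lt_or_ge (v : ℕ) (n-1) with h3 | h3
              · calc G2.dist u v ≤ G2.dist u (x m) + G2.dist (x m) v := hconn2.dist_triangle
                  _ ≤ (p - 2) + 1 := add_le_add (d2hub u)
                      (by rw [SimpleGraph.dist_comm]
                          exact d2hub' v (by omega) (Or.inr (by omega)))
                  _ ≤ p := by omega
              · -- v = n-1
                have hv2 : v = x (n-1) := by rw [hrep v]; congr 1; omega
                calc G2.dist u v ≤ G2.dist u (x (n-2)) + G2.dist (x (n-2)) v :=
                      hconn2.dist_triangle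
                  _ ≤ G2.dist u (x m) + G2.dist (x m) (x (n-2)) + G2.dist (x (n-2)) v := by
                      have := hconn2.dist_triangle (u := u) (v := x m) (w := x (n-2))
                      omega
                  _ ≤ (p - 2) + 1 + 1 := by
                      refine add_le_add (add_le_add (d2hub u) (dist_le_one adjm2)) ?_
                      rw [hv2]; exact dist_le_one adj21
                  _ ≤ p := by omega
        · -- u ≥ 1
          rcases lt_or_ge (u : ℕ) m with hu | hu
          · -- u a leaf
            calc G2.dist u v ≤ G2.dist u (x m) + G2.dist (x m) v := hconn2.dist_triangle
              _ ≤ 1 + (p - 2) := add_le_add (d2hub' u h0 (Or.inl hu))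
                  (by rw [SimpleGraph.dist_comm]; exact d2hub v)
              _ ≤ p := by omega
          · -- u on the path / tail, m ≤ u ≤ v
            rcases le_or_gt (v : ℕ) (n - 3) with hv3 | hv3
            · have := chain2 u v hu huv hv3
              omega
            · rcases Nat.lt_or_ge (v : ℕ) (n-1) with h3 | h3
              · -- v = n - 2
                calc G2.dist u v ≤ G2.dist u (x m) + G2.dist (x m) v := hconn2.dist_triangle
                  _ ≤ (p - 2) + 1 := add_le_add (d2hub u)
                      (by rw [SimpleGraph.dist_comm]
                          exact d2hub' v (by omega) (Or.inr (by omega)))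
                  _ ≤ p := by omega
              · -- v = n - 1
                have hv2 : v = x (n-1) := by rw [hrep v]; congr 1; omega
                calc G2.dist u v ≤ G2.dist u (x (n-2)) + G2.dist (x (n-2)) v :=
                      hconn2.dist_triangle
                  _ ≤ G2.dist u (x m) + G2.dist (x m) (x (n-2)) + G2.dist (x (n-2)) v := by
                      have := hconn2.dist_triangle (u := u) (v := x m) (w := x (n-2))
                      omega
                  _ ≤ (p - 2) + 1 + 1 := by
                      refine add_le_add (add_le_add (d2hub u) (dist_le_one adjm2)) ?_
                      rw [hv2]; exact dist_le_one adj21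
                  _ ≤ p := by omega
    intro u v
    rcases le_total (u : ℕ) (v : ℕ) with h | h
    · exact key u v h
    · rw [SimpleGraph.dist_comm]; exact key v u h
  -- lower bounds via potentials
  have lb1 : p ≤ G1.dist (x 0) (x (n-1)) := by
    set f : Fin n → ℤ := fun v => if (v : ℕ) < m then 0 else ((v : ℕ) : ℤ) - m + 1 with hf
    have hfspec : ∀ v : Fin n, ∃ k : ℤ, f v = k ∧
        (((v : ℕ) < m ∧ k = 0) ∨ (m ≤ (v : ℕ) ∧ k = ((v : ℕ) : ℤ) - m + 1)) := by
      intro v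
      refine ⟨f v, rfl, ?_⟩
      simp only [hf]
      split_ifs with h1
      · exact Or.inl ⟨h1, rfl⟩
      · exact Or.inr ⟨by omega, rfl⟩
    have hlip : ∀ a b : Fin n, G1.Adj a b → |f a - f b| ≤ 1 := by
      intro a b hab
      rw [hG1] at hab
      obtain ⟨-, hc⟩ := hab
      obtain ⟨ka, hka, hda⟩ := hfspec a
      obtain ⟨kb, hkb, hdb⟩ := hfspec b
      rw [hka, hkb, abs_sub_le_iff]
      rcases hc with ⟨h1, h2⟩ | ⟨h1, h2⟩ | ⟨i, hi1, hi2, ⟨h1, h2⟩ | ⟨h1, h2⟩⟩ |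
        ⟨i, hi1, hi2, ⟨h1, h2⟩ | ⟨h1, h2⟩⟩ <;>
      rcases hda with ⟨g1, g2⟩ | ⟨g1, g2⟩ <;>
      rcases hdb with ⟨j1, j2⟩ | ⟨j1, j2⟩ <;> omega
    obtain ⟨w, hw⟩ := hconn1.exists_walk_length_eq_dist (x 0) (x (n-1))
    have hb := walk_lip f hlip w
    rw [hw] at hb
    obtain ⟨k0, hk0, hd0⟩ := hfspec (x 0)
    obtain ⟨k1, hk1, hd1⟩ := hfspec (x (n-1))
    have e0 : ((x 0 : Fin n) : ℕ) = 0 := hx (by omega)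
    have e1 : ((x (n-1) : Fin n) : ℕ) = n - 1 := hx (by omega)
    rw [e0] at hd0
    rw [e1] at hd1
    rw [hk0, hk1, abs_sub_le_iff] at hb
    rcases hd0 with ⟨g1, g2⟩ | ⟨g1, g2⟩ <;>
    rcases hd1 with ⟨j1, j2⟩ | ⟨j1, j2⟩ <;> omega
  have lb2 : p ≤ G2.dist (x 0) (x (n-1)) := by
    set f : Fin n → ℤ := fun v =>
      if (v : ℕ) = 0 then 0
      else if (v : ℕ) < m then (p : ℤ) - 2
      else if (v : ℕ) ≤ n - 3 then ((n : ℤ) - 3) - ((v : ℕ) : ℤ) + 1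
      else if (v : ℕ) = n - 2 then (p : ℤ) - 1
      else (p : ℤ) with hf
    have hfspec : ∀ v : Fin n, ∃ k : ℤ, f v = k ∧
        (((v : ℕ) = 0 ∧ k = 0) ∨
         (1 ≤ (v : ℕ) ∧ (v : ℕ) < m ∧ k = (p : ℤ) - 2) ∨
         (m ≤ (v : ℕ) ∧ (v : ℕ) ≤ n - 3 ∧ k = ((n : ℤ) - 3) - ((v : ℕ) : ℤ) + 1) ∨
         ((v : ℕ) = n - 2 ∧ k = (p : ℤ) - 1) ∨
         ((v : ℕ) = n - 1 ∧ k = (p : ℤ))) := by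
      intro v
      refine ⟨f v, rfl, ?_⟩
      have hv := v.isLt
      simp only [hf]
      split_ifs with h1 h2 h3 h4
      · exact Or.inl ⟨h1, rfl⟩
      · exact Or.inr (Or.inl ⟨by omega, h2, rfl⟩)
      · exact Or.inr (Or.inr (Or.inl ⟨by omega, h3, rfl⟩))
      · exact Or.inr (Or.inr (Or.inr (Or.inl ⟨h4, rfl⟩)))
      · exact Or.inr (Or.inr (Or.inr (Or.inr ⟨by omega, rfl⟩)))
    have hlip : ∀ a b : Fin n, G2.Adj a b → |f a - f b| ≤ 1 := by
      intro a b hab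
      rw [hG2] at hab
      obtain ⟨-, hc⟩ := hab
      obtain ⟨ka, hka, hda⟩ := hfspec a
      obtain ⟨kb, hkb, hdb⟩ := hfspec b
      rw [hka, hkb, abs_sub_le_iff]
      rcases hc with ⟨h1, h2⟩ | ⟨h1, h2⟩ | ⟨i, hi1, hi2, ⟨h1, h2⟩ | ⟨h1, h2⟩⟩ |
        ⟨h1, h2⟩ | ⟨h1, h2⟩ | ⟨h1, h2⟩ | ⟨h1, h2⟩ |
        ⟨i, hi1, hi2, ⟨h1, h2⟩ | ⟨h1, h2⟩⟩ <;>
      rcases hda with ⟨g1, g2⟩ | ⟨g1, g2, g3⟩ | ⟨g1, g2, g3⟩ | ⟨g1, g2⟩ | ⟨g1, g2⟩ <;>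
      rcases hdb with ⟨j1, j2⟩ | ⟨j1, j2, j3⟩ | ⟨j1, j2, j3⟩ | ⟨j1, j2⟩ | ⟨j1, j2⟩ <;> omega
    obtain ⟨w, hw⟩ := hconn2.exists_walk_length_eq_dist (x 0) (x (n-1))
    have hb := walk_lip f hlip w
    rw [hw] at hb
    obtain ⟨k0, hk0, hd0⟩ := hfspec (x 0)
    obtain ⟨k1, hk1, hd1⟩ := hfspec (x (n-1))
    have e0 : ((x 0 : Fin n) : ℕ) = 0 := hx (by omega)
    have e1 : ((x (n-1) : Fin n) : ℕ) = n - 1 := hx (by omega)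
    rw [e0] at hd0
    rw [e1] at hd1
    rw [hk0, hk1, abs_sub_le_iff] at hb
    rcases hd0 with ⟨g1, g2⟩ | ⟨g1, g2, g3⟩ | ⟨g1, g2, g3⟩ | ⟨g1, g2⟩ | ⟨g1, g2⟩ <;>
    rcases hd1 with ⟨j1, j2⟩ | ⟨j1, j2, j3⟩ | ⟨j1, j2, j3⟩ | ⟨j1, j2⟩ | ⟨j1, j2⟩ <;> omega
  -- diameters
  have ediam_ne_top : ∀ (G : SimpleGraph (Fin n)), G.Connected → (∀ u v, G.dist u v ≤ p) →
      G.ediam ≠ ⊤ := by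
    intro G hc hub
    have h : G.ediam ≤ (p : ℕ∞) := by
      apply SimpleGraph.ediam_le_of_edist_le
      intro u v
      obtain ⟨w, hw⟩ := hc.exists_walk_length_eq_dist u v
      calc G.edist u v ≤ (w.length : ℕ∞) := SimpleGraph.edist_le w
        _ ≤ (p : ℕ∞) := by rw [hw]; exact_mod_cast hub u v
    intro htop
    rw [htop] at h
    exact absurd (le_antisymm le_top h).symm (by simp)
  have hdiam : ∀ (G : SimpleGraph (Fin n)), G.Connected → (∀ u v, G.dist u v ≤ p) →
      (p ≤ G.dist (x 0) (x (n-1))) → G.diam = p := by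
    intro G hc hub hlb
    have hne := ediam_ne_top G hc hub
    have h1 : p ≤ G.diam := le_trans hlb (SimpleGraph.dist_le_diam hne)
    obtain ⟨u, v, huv⟩ := SimpleGraph.exists_dist_eq_diam (G := G)
    have h2 : G.diam ≤ p := huv ▸ hub u v
    omega
  refine ⟨hconn1, hconn2, hdiam G1 hconn1 ub1 lb1, hdiam G2 hconn2 ub2 lb2, ⟨⟨Equiv.refl _, ?_⟩⟩⟩
  -- induced subgraph isomorphism (identity map)
  intro a b
  simp only [Equiv.refl_apply, SimpleGraph.comap_adj, Function.Embedding.coe_subtype]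
  rw [hG1, hG2]
  obtain ⟨ha1, ha2⟩ := a.2
  obtain ⟨hb1, hb2⟩ := b.2
  constructor
  · rintro ⟨hneq, hc⟩
    refine ⟨hneq, ?_⟩
    rcases hc with ⟨h1, h2⟩ | ⟨h1, h2⟩ | ⟨i, hi1, hi2, ⟨h1, h2⟩ | ⟨h1, h2⟩⟩ |
      ⟨h1, h2⟩ | ⟨h1, h2⟩ | ⟨h1, h2⟩ | ⟨h1, h2⟩ |
      ⟨i, hi1, hi2, ⟨h1, h2⟩ | ⟨h1, h2⟩⟩
    · omega
    · omega
    · exact Or.inr (Or.inr (Or.inl ⟨i, hi1, by omega, Or.inl ⟨h1, h2⟩⟩))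
    · exact Or.inr (Or.inr (Or.inl ⟨i, hi1, by omega, Or.inr ⟨h1, h2⟩⟩))
    · omega
    · omega
    · omega
    · omega
    · omega
    · omega
  · rintro ⟨hneq, hc⟩
    refine ⟨hneq, ?_⟩
    rcases hc with ⟨h1, h2⟩ | ⟨h1, h2⟩ | ⟨i, hi1, hi2, ⟨h1, h2⟩ | ⟨h1, h2⟩⟩ |
      ⟨i, hi1, hi2, ⟨h1, h2⟩ | ⟨h1, h2⟩⟩
    · omega
    · omega
    · exact Or.inr (Or.inr (Or.inl ⟨i, hi1, by omega, Or.inl ⟨h1, h2⟩⟩))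
    · exact Or.inr (Or.inr (Or.inl ⟨i, hi1, by omega, Or.inr ⟨h1, h2⟩⟩))
    · omega
    · omega
end
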